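/- Let h : ℕ → ℕ satisfy condition (a), let i ≥ 1 be an integer, let p ∈ ℕ, and let q ∈ ℕ be a multiple of 2^(i-1). If h(2^i · ⌊p/2^i⌋) < q, then h(p) < q (equivalently, if h(Σ_{k=i}^n p_k 2^k) < Σ_{k=i-1}^n q_k 2^k for binary digits p_k, q_k, then h(Σ_{k=0}^n p_k 2^k) < Σ_{k=i-1}^n q_k 2^k). -/

import Mathlib

/-- Condition (a): if `⌊z/2^i⌋ = ⌊z'/2^i⌋` for some `i ≥ 1`,
then `⌊h(z)/2^(i-1)⌋ = ⌊h(z')/2^(i-1)⌋`. -/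
def CondA (h : ℕ → ℕ) : Prop :=
  ∀ z z' i : ℕ, 1 ≤ i → z / 2 ^ i = z' / 2 ^ i →
    h z / 2 ^ (i - 1) = h z' / 2 ^ (i - 1)

theorem stmt_3 (h : ℕ → ℕ) (hA : CondA h) (i : ℕ) (hi : 1 ≤ i) (p q : ℕ)
    (hq : 2 ^ (i - 1) ∣ q) (hlt : h (2 ^ i * (p / 2 ^ i)) < q) :
    h p < q := by
  have hdiv : p / 2 ^ i = (2 ^ i * (p / 2 ^ i)) / 2 ^ i := by
    rw [Nat.mul_div_cancel_left _ (by positivity : 0 < 2 ^ i)]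
  have heq := hA p (2 ^ i * (p / 2 ^ i)) i hi hdiv
  have h1 : h (2 ^ i * (p / 2 ^ i)) / 2 ^ (i - 1) < q / 2 ^ (i - 1) :=
    Nat.div_lt_div_of_lt_of_dvd hq hlt
  rw [← heq] at h1
  by_contra hc
  push_neg at hc
  exact absurd (Nat.div_le_div_right hc) (Nat.not_le.mpr h1)
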